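/- Let G be a group and let x, y, z be elements of G with x ∈ γ_a(G), y ∈ γ_b(G), z ∈ γ_c(G), where a + b + c = n. Then the product [x,y,z]·[y,z,x]·[z,x,y] lies in γ_{n+1}(G), where [x,y,z] denotes the left-normed commutator [[x,y],z]. -/

import Mathlib

/-- The commutator `[x,y] = x⁻¹y⁻¹xy` (the convention used in the paper). -/
def commE {G : Type*} [Group G] (x y : G) : G := x⁻¹ * y⁻¹ * x * y

/-- The left-normed commutator `[x,y,z] = [[x,y],z]`. -/
def commE3 {G : Type*} [Group G] (x y z : G) : G := commE (commE x y) z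

/-- Three subgroups lemma relative to a normal subgroup. -/
lemma three_subgroups' {G : Type*} [Group G] {H₁ H₂ H₃ N : Subgroup G} [N.Normal]
    (h1 : ⁅⁅H₂, H₃⁆, H₁⁆ ≤ N) (h2 : ⁅⁅H₃, H₁⁆, H₂⁆ ≤ N) : ⁅⁅H₁, H₂⁆, H₃⁆ ≤ N := by
  set f := QuotientGroup.mk' N with hf
  have key : ∀ A B C : Subgroup G,
      ⁅⁅A, B⁆, C⁆ ≤ N ↔ ⁅⁅A.map f, B.map f⁆, C.map f⁆ = ⊥ := by
    intro A B C
    rw [← Subgroup.map_commutator, ← Subgroup.map_commutator, Subgroup.map_eq_bot_iff,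
      QuotientGroup.ker_mk']
  rw [key]
  exact Subgroup.commutator_commutator_eq_bot_of_rotate
    ((key _ _ _).mp h1) ((key _ _ _).mp h2)

/-- `⁅γ_{i+1}, γ_{j+1}⁆ ≤ γ_{i+j+2}` (0-indexed lower central series). -/
lemma lcs_comm (G : Type*) [Group G] (j i : ℕ) :
    ⁅(⊤ : Subgroup G).lowerCentralSeries i, (⊤ : Subgroup G).lowerCentralSeries j⁆ ≤ (⊤ : Subgroup G).lowerCentralSeries (i + j + 1) := by
  induction j generalizing i with
  | zero =>
    rw [Subgroup.lowerCentralSeries_zero]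
    exact le_of_eq rfl
  | succ j ih =>
    have h1 : ⁅⁅(⊤ : Subgroup G), (⊤ : Subgroup G).lowerCentralSeries i⁆, (⊤ : Subgroup G).lowerCentralSeries j⁆ ≤
        (⊤ : Subgroup G).lowerCentralSeries (i + (j + 1) + 1) := by
      rw [Subgroup.commutator_comm (⊤ : Subgroup G) ((⊤ : Subgroup G).lowerCentralSeries i)]
      have := ih (i + 1)
      have harith : i + 1 + j + 1 = i + (j + 1) + 1 := by omega
      rw [harith] at this
      exact this
    have h2 : ⁅⁅(⊤ : Subgroup G).lowerCentralSeries i, (⊤ : Subgroup G).lowerCentralSeries j⁆, (⊤ : Subgroup G)⁆ ≤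
        (⊤ : Subgroup G).lowerCentralSeries (i + (j + 1) + 1) := by
      have : ⁅⁅(⊤ : Subgroup G).lowerCentralSeries i, (⊤ : Subgroup G).lowerCentralSeries j⁆, (⊤ : Subgroup G)⁆ ≤
          ⁅(⊤ : Subgroup G).lowerCentralSeries (i + j + 1), (⊤ : Subgroup G)⁆ :=
        Subgroup.commutator_mono (ih i) le_rfl
      rw [show (⁅(⊤ : Subgroup G).lowerCentralSeries (i + j + 1), (⊤ : Subgroup G)⁆ : Subgroup G) =
        (⊤ : Subgroup G).lowerCentralSeries (i + j + 2) from rfl] at this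
      have harith : i + j + 2 = i + (j + 1) + 1 := by omega
      rwa [harith] at this
    have : ⁅⁅(⊤ : Subgroup G).lowerCentralSeries j, (⊤ : Subgroup G)⁆, (⊤ : Subgroup G).lowerCentralSeries i⁆ ≤
        (⊤ : Subgroup G).lowerCentralSeries (i + (j + 1) + 1) := three_subgroups' h1 h2
    rw [show ((⊤ : Subgroup G).lowerCentralSeries (j + 1) : Subgroup G) =
      ⁅(⊤ : Subgroup G).lowerCentralSeries j, (⊤ : Subgroup G)⁆ from rfl, Subgroup.commutator_comm]
    exact this

open scoped commutatorElement in
lemma commE_mem_lcs {G : Type*} [Group G] {u v : G} {i j : ℕ}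
    (hu : u ∈ (⊤ : Subgroup G).lowerCentralSeries i) (hv : v ∈ (⊤ : Subgroup G).lowerCentralSeries j) :
    commE u v ∈ (⊤ : Subgroup G).lowerCentralSeries (i + j + 1) := by
  have : commE u v = ⁅u⁻¹, v⁻¹⁆ := by
    simp [commE, commutatorElement_def]
  rw [this]
  exact lcs_comm G j i (Subgroup.commutator_mem_commutator (inv_mem hu) (inv_mem hv))

lemma commE_eq_one_commute {Q : Type*} [Group Q] {u v : Q} (h : commE u v = 1) :
    Commute u v := by
  have h2 : v * u * commE u v = u * v := by rw [commE]; group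
  rw [h, mul_one] at h2
  exact h2.symm

/-- Hall–Witt identity in the `commE` convention. -/
lemma hall_witt {Q : Type*} [Group Q] (x y z : Q) :
    (y⁻¹ * commE (commE x y⁻¹) z * y) * (z⁻¹ * commE (commE y z⁻¹) x * z) *
      (x⁻¹ * commE (commE z x⁻¹) y * x) = 1 := by
  simp only [commE]; group

/-- Evaluation of one Hall–Witt term modulo high-weight commutators. -/
lemma aux_term {Q : Type*} [Group Q] (X Y Z : Q)
    (hT : ∀ g : Q, Commute (commE3 X Y Z) g)
    (hw : commE (commE (commE X Y)⁻¹ Y⁻¹) Z = 1) (g : Q) :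
    g⁻¹ * commE (commE X Y⁻¹) Z * g = (commE3 X Y Z)⁻¹ := by
  set c := commE X Y with hc
  set T := commE3 X Y Z with hTdef
  set w := commE c⁻¹ Y⁻¹ with hwdef
  have hT' : ∀ p : Q, Commute T⁻¹ p := fun p => (hT p).inv_left
  have hconj : ∀ p : Q, p⁻¹ * T⁻¹ * p = T⁻¹ := by
    intro p
    have h := (hT' p).eq
    rw [mul_assoc, h, ← mul_assoc, inv_mul_cancel, one_mul]
  have E1 : commE (commE X Y⁻¹) Z = w⁻¹ * (c * T⁻¹ * c⁻¹) * w * commE w Z := by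
    simp only [hwdef, hTdef, hc, commE3, commE]; group
  rw [E1, hw, mul_one]
  have h1 : c * T⁻¹ * c⁻¹ = T⁻¹ := by
    have := hconj c⁻¹
    rwa [inv_inv] at this
  rw [h1, hconj w, hconj g]

/-- Let `G` be a group and let `x, y, z ∈ G` with `x ∈ γ_a(G)`,
`y ∈ γ_b(G)`, `z ∈ γ_c(G)`, where `a + b + c = n`. Then
`[x,y,z]·[y,z,x]·[z,x,y] ∈ γ_{n+1}(G)`, where `[x,y,z] = [[x,y],z]`.
Here `γ_k(G) = lowerCentralSeries G (k-1)`, so `γ_{n+1}(G) = lowerCentralSeries G n`. -/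
theorem jacobi_type_identity_lower_central
    (G : Type*) [Group G] (x y z : G) (a b c n : ℕ)
    (ha : 1 ≤ a) (hb : 1 ≤ b) (hc : 1 ≤ c) (habc : a + b + c = n)
    (hx : x ∈ (⊤ : Subgroup G).lowerCentralSeries (a - 1))
    (hy : y ∈ (⊤ : Subgroup G).lowerCentralSeries (b - 1))
    (hz : z ∈ (⊤ : Subgroup G).lowerCentralSeries (c - 1)) :
    commE3 x y z * commE3 y z x * commE3 z x y ∈ (⊤ : Subgroup G).lowerCentralSeries n := by
  set N := (⊤ : Subgroup G).lowerCentralSeries n with hN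
  set f := QuotientGroup.mk' N with hf
  -- kill high-weight commutators in the quotient
  have hkill : ∀ (u v : G) (i j : ℕ), u ∈ (⊤ : Subgroup G).lowerCentralSeries i →
      v ∈ (⊤ : Subgroup G).lowerCentralSeries j → n ≤ i + j + 1 → commE (f u) (f v) = 1 := by
    intro u v i j hu hv hij
    have h1 : commE u v ∈ (⊤ : Subgroup G).lowerCentralSeries (i + j + 1) := commE_mem_lcs hu hv
    have h2 : commE u v ∈ N := Subgroup.lowerCentralSeries_antitone ⊤ hij h1
    have : f (commE u v) = 1 := (QuotientGroup.eq_one_iff _).mpr h2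
    simpa [commE, map_mul, map_inv] using this
  have hmapE : ∀ u v : G, f (commE u v) = commE (f u) (f v) := by
    intro u v; simp [commE, map_mul, map_inv]
  have hmapE3 : ∀ u v w : G, f (commE3 u v w) = commE3 (f u) (f v) (f w) := by
    intro u v w; simp [commE3, hmapE]
  -- centrality of weight-n elements
  have hcentral : ∀ (u : G) (i : ℕ), u ∈ (⊤ : Subgroup G).lowerCentralSeries i → n ≤ i + 1 →
      ∀ g : G ⧸ N, Commute (f u) g := by
    intro u i hu hi g
    obtain ⟨g', rfl⟩ := QuotientGroup.mk'_surjective N g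
    exact commE_eq_one_commute
      (hkill u g' i 0 hu (by rw [Subgroup.lowerCentralSeries_zero]; trivial) (by omega))
  -- memberships
  have hxy : commE x y ∈ (⊤ : Subgroup G).lowerCentralSeries (a + b - 1) := by
    have := commE_mem_lcs hx hy
    rwa [show (a-1)+(b-1)+1 = a+b-1 by omega] at this
  have hyz : commE y z ∈ (⊤ : Subgroup G).lowerCentralSeries (b + c - 1) := by
    have := commE_mem_lcs hy hz
    rwa [show (b-1)+(c-1)+1 = b+c-1 by omega] at this
  have hzx : commE z x ∈ (⊤ : Subgroup G).lowerCentralSeries (c + a - 1) := by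
    have := commE_mem_lcs hz hx
    rwa [show (c-1)+(a-1)+1 = c+a-1 by omega] at this
  have hxyz : commE3 x y z ∈ (⊤ : Subgroup G).lowerCentralSeries (n - 1) := by
    have := commE_mem_lcs hxy hz
    rwa [show (a+b-1)+(c-1)+1 = n-1 by omega] at this
  have hyzx : commE3 y z x ∈ (⊤ : Subgroup G).lowerCentralSeries (n - 1) := by
    have := commE_mem_lcs hyz hx
    rwa [show (b+c-1)+(a-1)+1 = n-1 by omega] at this
  have hzxy : commE3 z x y ∈ (⊤ : Subgroup G).lowerCentralSeries (n - 1) := by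
    have := commE_mem_lcs hzx hy
    rwa [show (c+a-1)+(b-1)+1 = n-1 by omega] at this
  -- the three central elements in the quotient
  have hT1 : ∀ g : G ⧸ N, Commute (commE3 (f x) (f y) (f z)) g := by
    intro g; rw [← hmapE3]; exact hcentral _ _ hxyz (by omega) g
  have hT2 : ∀ g : G ⧸ N, Commute (commE3 (f y) (f z) (f x)) g := by
    intro g; rw [← hmapE3]; exact hcentral _ _ hyzx (by omega) g
  have hT3 : ∀ g : G ⧸ N, Commute (commE3 (f z) (f x) (f y)) g := by
    intro g; rw [← hmapE3]; exact hcentral _ _ hzxy (by omega) g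
  -- the "w"-commutators vanish
  have hw1 : commE (commE (commE (f x) (f y))⁻¹ (f y)⁻¹) (f z) = 1 := by
    rw [← hmapE, ← map_inv, ← map_inv, ← hmapE]
    exact hkill _ _ ((a-1)+(b-1)+1+(b-1)+1) (c-1)
      (commE_mem_lcs (inv_mem (commE_mem_lcs hx hy)) (inv_mem hy)) hz (by omega)
  have hw2 : commE (commE (commE (f y) (f z))⁻¹ (f z)⁻¹) (f x) = 1 := by
    rw [← hmapE, ← map_inv, ← map_inv, ← hmapE]
    exact hkill _ _ ((b-1)+(c-1)+1+(c-1)+1) (a-1)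
      (commE_mem_lcs (inv_mem (commE_mem_lcs hy hz)) (inv_mem hz)) hx (by omega)
  have hw3 : commE (commE (commE (f z) (f x))⁻¹ (f x)⁻¹) (f y) = 1 := by
    rw [← hmapE, ← map_inv, ← map_inv, ← hmapE]
    exact hkill _ _ ((c-1)+(a-1)+1+(a-1)+1) (b-1)
      (commE_mem_lcs (inv_mem (commE_mem_lcs hz hx)) (inv_mem hx)) hy (by omega)
  -- Hall–Witt in the quotient
  have hHW := hall_witt (f x) (f y) (f z)
  rw [aux_term (f x) (f y) (f z) hT1 hw1 (f y),
      aux_term (f y) (f z) (f x) hT2 hw2 (f z),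
      aux_term (f z) (f x) (f y) hT3 hw3 (f x)] at hHW
  -- conclude
  rw [← QuotientGroup.eq_one_iff (N := N) (commE3 x y z * commE3 y z x * commE3 z x y)]
  have hgoal : f (commE3 x y z * commE3 y z x * commE3 z x y) =
      commE3 (f x) (f y) (f z) * commE3 (f y) (f z) (f x) * commE3 (f z) (f x) (f y) := by
    simp [map_mul, hmapE3]
  show f (commE3 x y z * commE3 y z x * commE3 z x y) = 1
  rw [hgoal]
  set T1 := commE3 (f x) (f y) (f z)
  set T2 := commE3 (f y) (f z) (f x)
  set T3 := commE3 (f z) (f x) (f y)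
  have hrev : T3 * T2 * T1 = 1 := by
    have : (T3 * T2 * T1)⁻¹ = 1 := by
      rw [mul_inv_rev, mul_inv_rev, ← mul_assoc]
      exact hHW
    rwa [inv_eq_one] at this
  calc T1 * T2 * T3 = T3 * (T1 * T2) := ((hT3 (T1 * T2)).symm.eq)
    _ = T3 * T2 * T1 := by rw [(hT1 T2).eq, mul_assoc]
    _ = 1 := hrev
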